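/- Let N ≥ 2 and let U ⊆ ℝ^N be open. Let a, b : U → ℝ be C², and let μ¹, …, μ^N : U → ℝ be C¹ functions such that μ^i(R) ≠ μ^j(R) for all i ≠ j and all R ∈ U. Suppose that ∂_i b = μ^i ∂_i a on U for every i, and that ∂_j μ^i = (∂_j a)/(μ^j − μ^i) on U for all i ≠ j. Then ∂_i ∂_j a = 2 (∂_i a)(∂_j a)/(μ^j − μ^i)² on U for all i ≠ j. -/

import Mathlib

/-- Partial derivative of `f : ℝⁿ → ℝ` in the `i`-th coordinate direction. -/
noncomputable def pd {n : ℕ} (i : Fin n) (f : (Fin n → ℝ) → ℝ) (x : Fin n → ℝ) : ℝ :=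
  fderiv ℝ f x (Pi.single i 1)

lemma pd_pd_eq {n : ℕ} (i j : Fin n) {f : (Fin n → ℝ) → ℝ} {x : Fin n → ℝ}
    (hf : ContDiffAt ℝ 2 f x) :
    pd i (pd j f) x = fderiv ℝ (fderiv ℝ f) x (Pi.single i 1) (Pi.single j 1) := by
  have hd : DifferentiableAt ℝ (fderiv ℝ f) x :=
    (hf.fderiv_right (m := 1) le_rfl).differentiableAt one_ne_zero
  show fderiv ℝ (fun y => fderiv ℝ f y (Pi.single j 1)) x (Pi.single i 1) = _
  rw [fderiv_clm_apply hd (differentiableAt_const _)]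
  simp

lemma pd_pd_comm {n : ℕ} (i j : Fin n) {f : (Fin n → ℝ) → ℝ} {x : Fin n → ℝ}
    (hf : ContDiffAt ℝ 2 f x) :
    pd i (pd j f) x = pd j (pd i f) x := by
  rw [pd_pd_eq i j hf, pd_pd_eq j i hf]
  exact (hf.isSymmSndFDerivAt (by simp)) _ _

/-- Derivation of the second Gibbons–Tsarev equation: compatibility of
`∂ᵢ b = μⁱ ∂ᵢ a` with `∂ⱼ μⁱ = ∂ⱼ a / (μʲ − μⁱ)` forces
`∂ᵢ∂ⱼ a = 2 ∂ᵢa ∂ⱼa / (μʲ − μⁱ)²` for `i ≠ j`. -/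
theorem gibbons_tsarev_second_equation
    {N : ℕ} (hN : 2 ≤ N) (U : Set (Fin N → ℝ)) (hU : IsOpen U)
    (a b : (Fin N → ℝ) → ℝ) (μ : Fin N → (Fin N → ℝ) → ℝ)
    (ha : ContDiffOn ℝ 2 a U) (hb : ContDiffOn ℝ 2 b U)
    (hμ : ∀ i, ContDiffOn ℝ 1 (μ i) U)
    (hdistinct : ∀ i j : Fin N, i ≠ j → ∀ R ∈ U, μ i R ≠ μ j R)
    (hba : ∀ i : Fin N, ∀ R ∈ U, pd i b R = μ i R * pd i a R)
    (hμa : ∀ i j : Fin N, i ≠ j → ∀ R ∈ U,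
      pd j (μ i) R = pd j a R / (μ j R - μ i R)) :
    ∀ i j : Fin N, i ≠ j → ∀ R ∈ U,
      pd i (pd j a) R = 2 * pd i a R * pd j a R / (μ j R - μ i R) ^ 2 := by
  intro i j hij R hR
  have hRU : U ∈ nhds R := hU.mem_nhds hR
  have haR : ContDiffAt ℝ 2 a R := ha.contDiffAt hRU
  have hbR : ContDiffAt ℝ 2 b R := hb.contDiffAt hRU
  have hpda : ∀ k : Fin N, DifferentiableAt ℝ (pd k a) R := by
    intro k
    have hd : ContDiffAt ℝ 1 (fderiv ℝ a) R := haR.fderiv_right (m := 1) le_rfl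
    exact (hd.differentiableAt one_ne_zero).clm_apply (differentiableAt_const _)
  have hμd : ∀ k, DifferentiableAt ℝ (μ k) R :=
    fun k => ((hμ k).contDiffAt hRU).differentiableAt one_ne_zero
  -- mixed partial of b in terms of a
  have key : ∀ k l : Fin N,
      pd k (pd l b) R = μ l R * pd k (pd l a) R + pd l a R * pd k (μ l) R := by
    intro k l
    have hev : pd l b =ᶠ[nhds R] fun y => μ l y * pd l a y :=
      Filter.eventuallyEq_of_mem hRU (fun y hy => hba l y hy)
    have heq : fderiv ℝ (pd l b) R = fderiv ℝ (fun y => μ l y * pd l a y) R :=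
      hev.fderiv_eq
    show fderiv ℝ (pd l b) R (Pi.single k 1) = _
    rw [heq, fderiv_fun_mul (hμd l) (hpda l)]
    simp only [ContinuousLinearMap.add_apply, ContinuousLinearMap.smul_apply,
      smul_eq_mul]
    show μ l R * pd k (pd l a) R + pd l a R * pd k (μ l) R = _
    ring
  have e1 := key i j
  have e2 := key j i
  have symb : pd i (pd j b) R = pd j (pd i b) R := pd_pd_comm i j hbR
  have syma : pd j (pd i a) R = pd i (pd j a) R := pd_pd_comm j i haR
  have h1 : pd i (μ j) R = pd i a R / (μ i R - μ j R) := hμa j i hij.symm R hR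
  have h2 : pd j (μ i) R = pd j a R / (μ j R - μ i R) := hμa i j hij R hR
  have hmn : μ j R - μ i R ≠ 0 :=
    sub_ne_zero.mpr (hdistinct j i hij.symm R hR)
  have hnm : μ i R - μ j R ≠ 0 :=
    sub_ne_zero.mpr (hdistinct i j hij R hR)
  rw [e1, e2, syma, h1, h2] at symb
  field_simp at symb ⊢
  have hfac : (μ i R - μ j R) *
      (pd i (pd j a) R * (μ j R - μ i R) ^ 2 - 2 * pd i a R * pd j a R) = 0 := by
    linear_combination symb
  have h0 := (mul_eq_zero.mp hfac).resolve_left hnm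
  linarith [h0]
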